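/- Let μ, ν be partitions of n and suppose there exists a partition λ of n with g(μ, ν, λ) > 0 such that every partition τ with g(μ, ν, τ) > 0 satisfies τ ⪯ λ in dominance order. Then for every k, a monomial x^α appears in s_μ ∗ s_ν(x_1,…,x_k) if and only if it appears in s_λ(x_1,…,x_k); in particular s_μ ∗ s_ν has a saturated Newton polytope. -/

import Mathlib

/-- A partition: a weakly decreasing list of positive integers. -/
def IsPartition (l : List ℕ) : Prop :=
  l.Pairwise (· ≥ ·) ∧ ∀ x ∈ l, 0 < x

/-- Dominance order: `l` dominates `m` (all partial sums of `l` are at least those of `m`). -/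
def Dominates (l m : List ℕ) : Prop :=
  ∀ i, (m.take i).sum ≤ (l.take i).sum

/-- A semistandard Young tableau of shape `l`, given as its list of rows:
rows weakly increase, columns strictly increase. -/
def IsSSYT (l : List ℕ) (T : List (List ℕ)) : Prop :=
  T.map List.length = l ∧
  (∀ r ∈ T, r.Pairwise (· ≤ ·)) ∧
  ∀ i j, j < (T.getD (i+1) []).length →
    (T.getD i []).getD j 0 < (T.getD (i+1) []).getD j 0

/-- The number of entries of the tableau `T` equal to `v`. -/
def contentCount (T : List (List ℕ)) (v : ℕ) : ℕ :=
  (T.map fun r => r.count v).sum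

/-- `T` has content `a` (a vector of multiplicities indexed by `Fin k`). -/
def hasContent (k : ℕ) (T : List (List ℕ)) (a : Fin k → ℕ) : Prop :=
  ∀ v : ℕ, contentCount T v = if h : v < k then a ⟨v, h⟩ else 0

/-- The weakly decreasing rearrangement of a list of naturals. -/
def sortDesc (l : List ℕ) : List ℕ :=
  ((l : Multiset ℕ).sort (· ≤ ·)).reverse

/-- The set of exponent vectors of monomials appearing in `s_l(x_1, …, x_k)`. -/
def schurSupport (k : ℕ) (l : List ℕ) : Set (Fin k → ℕ) :=
  {a | ∃ T, IsSSYT l T ∧ hasContent k T a}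

/-- The set of exponent vectors of monomials appearing in the Kronecker product
`s_μ ∗ s_ν = ∑_τ g(μ,ν,τ) s_τ` in `k` variables, where `g : List ℕ → ℕ` is the
(nonnegative) coefficient function `τ ↦ g(μ,ν,τ)`. -/
def kronSupport (n k : ℕ) (g : List ℕ → ℕ) : Set (Fin k → ℕ) :=
  {a | ∃ τ, IsPartition τ ∧ τ.sum = n ∧ 0 < g τ ∧ a ∈ schurSupport k τ}

namespace KronSNP

/-- partial sums of a shape function -/
def P (t : ℕ → ℕ) (i : ℕ) : ℕ := ∑ r ∈ Finset.range i, t r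

/-- shape function of a list -/
def tl (l : List ℕ) : ℕ → ℕ := fun r => l.getD r 0

lemma take_sum_eq (l : List ℕ) (i : ℕ) : (l.take i).sum = P (tl l) i := by
  induction l generalizing i with
  | nil => simp [P, tl]
  | cons x xs ih =>
    cases i with
    | zero => simp [P]
    | succ j =>
      rw [List.take_succ_cons, List.sum_cons, ih j]
      show _ = ∑ r ∈ Finset.range (j+1), tl (x::xs) r
      rw [Finset.sum_range_succ']
      simp [tl, P]
      omega

lemma tl_antitone {l : List ℕ} (hl : l.Pairwise (· ≥ ·)) : Antitone (tl l) := by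
  intro r s hrs
  rcases eq_or_lt_of_le hrs with rfl | hlt
  · exact le_refl _
  by_cases hs : s < l.length
  · have hr : r < l.length := lt_trans hlt hs
    rw [tl, tl, List.getD_eq_getElem _ _ hr, List.getD_eq_getElem _ _ hs]
    exact List.pairwise_iff_getElem.1 hl r s hr hs hlt
  · rw [tl, List.getD_eq_default _ _ (not_lt.1 hs)]
    exact Nat.zero_le _

lemma tl_eq_zero {l : List ℕ} {r : ℕ} (h : l.length ≤ r) : tl l r = 0 :=
  List.getD_eq_default _ _ h

lemma P_mono (t : ℕ → ℕ) : Monotone (P t) := by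
  intro i j hij
  exact Finset.sum_le_sum_of_subset (Finset.range_subset_range.2 hij)

lemma sum_range_eq_list (N : ℕ) (h : ℕ → ℕ) :
    (Finset.range N).sum h = ((List.range N).map h).sum := by
  have : (List.range N).toFinset = Finset.range N := by ext x; simp
  rw [← this, List.sum_toFinset _ List.nodup_range]

/-- count of members of S in a list -/
lemma sum_count_eq_countP (row : List ℕ) (S : Finset ℕ) :
    ∑ v ∈ S, row.count v = row.countP (fun x => decide (x ∈ S)) := by
  induction row with
  | nil => simp
  | cons x xs ih =>
    rw [List.countP_cons]
    by_cases hx : x ∈ S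
    · simp only [List.count_cons]
      rw [Finset.sum_add_distrib, ih]
      simp [hx, Finset.sum_ite_eq', beq_iff_eq]
    · simp only [List.count_cons]
      rw [Finset.sum_add_distrib, ih]
      simp [hx, Finset.sum_ite_eq', beq_iff_eq]

lemma countP_eq_sum_range (row : List ℕ) (p : ℕ → Bool) :
    row.countP p = ∑ c ∈ Finset.range row.length, (if p (row.getD c 0) then 1 else 0) := by
  induction row with
  | nil => simp
  | cons x xs ih =>
    rw [List.countP_cons, List.length_cons, Finset.sum_range_succ']
    simp only [List.getD_cons_succ, List.getD_cons_zero]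
    rw [← ih]

lemma downclosed_card_le (p : ℕ → Prop) [DecidablePred p]
    (hdc : ∀ r s, r ≤ s → p s → p r) (i : ℕ)
    (F : Finset ℕ) (hF : ∀ r ∈ F, p r) (hcard : F.card ≤ i) :
    F.card ≤ ((Finset.range i).filter p).card := by
  by_cases hall : ∀ r < i, p r
  · have : (Finset.range i).filter p = Finset.range i := by
      apply Finset.filter_true_of_mem
      intro x hx; exact hall x (Finset.mem_range.1 hx)
    rw [this, Finset.card_range]; exact hcard
  · push_neg at hall
    obtain ⟨w, hwi, hwp⟩ := hall
    have hex : ∃ r, ¬ p r := ⟨w, hwp⟩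
    set r0 := Nat.find hex with hr0
    have hr0p : ¬ p r0 := Nat.find_spec hex
    have hmin : ∀ s < r0, p s := fun s hs => not_not.1 (Nat.find_min hex hs)
    have hr0w : r0 ≤ w := Nat.find_min' hex hwp
    have h1 : F ⊆ Finset.range r0 := by
      intro r hr
      rw [Finset.mem_range]
      by_contra hge
      exact hr0p (hdc r0 r (not_lt.1 hge) (hF r hr))
    have h2 : Finset.range r0 ⊆ (Finset.range i).filter p := by
      intro s hs
      rw [Finset.mem_range] at hs
      exact Finset.mem_filter.2 ⟨Finset.mem_range.2 (lt_of_lt_of_le hs (le_trans hr0w (le_of_lt hwi))), hmin s hs⟩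
    calc F.card ≤ (Finset.range r0).card := Finset.card_le_card h1
    _ ≤ _ := Finset.card_le_card h2

lemma map_sum_getD (T : List (List ℕ)) (f : List ℕ → ℕ) :
    (T.map f).sum = ∑ r ∈ Finset.range T.length, f (T.getD r []) := by
  induction T with
  | nil => simp
  | cons x xs ih =>
    rw [List.map_cons, List.sum_cons, List.length_cons, Finset.sum_range_succ']
    simp only [List.getD_cons_succ, List.getD_cons_zero]
    rw [ih]
    omega

lemma filter_range_lt (m M : ℕ) (h : m ≤ M) :
    (Finset.range M).filter (fun c => c < m) = Finset.range m := by
  ext x; simp only [Finset.mem_filter, Finset.mem_range]; omega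

theorem ssyt_facts {τ : List ℕ} {T : List (List ℕ)} (hτ : IsPartition τ) (hT : IsSSYT τ T)
    {k : ℕ} {a : Fin k → ℕ} (ha : hasContent k T a) :
    (∑ i, a i = τ.sum) ∧ τ.length ≤ k ∧
    ∀ S : Finset (Fin k), ∑ i ∈ S, a i ≤ P (tl τ) S.card := by
  classical
  set L := T.length with hL
  have hlen : T.map List.length = τ := hT.1
  have hLτ : τ.length = L := by rw [← hlen]; simp [hL]
  set t := tl τ with ht
  have t_anti : Antitone t := tl_antitone hτ.1
  set row : ℕ → List ℕ := fun r => T.getD r [] with hrow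
  have row_len : ∀ r, (row r).length = t r := by
    intro r
    by_cases h : r < L
    · have h1 : row r = T[r] := List.getD_eq_getElem T [] h
      have h2 : t r = τ[r]'(by omega) := List.getD_eq_getElem τ 0 (by omega)
      have h3 : τ[r]'(by omega) = List.length (T[r]) := by
        rw [List.getElem_of_eq hlen.symm (by omega)]
        simp
      rw [h1, h2, h3]
    · rw [hrow]
      simp only []
      rw [List.getD_eq_default _ _ (by omega), ht, tl_eq_zero (by omega)]
      rfl
  set e : ℕ → ℕ → ℕ := fun r c => (row r).getD c 0 with he
  have col : ∀ r c, c < t (r+1) → e r c < e (r+1) c := by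
    intro r c hc
    exact hT.2.2 r c (by rw [← row_len] at hc; exact hc)
  have chain : ∀ r s c, r < s → c < t s → e r c < e s c := by
    intro r s c hrs hc
    induction s with
    | zero => omega
    | succ s ih =>
      rcases Nat.lt_succ_iff_lt_or_eq.1 hrs with h | h
      · exact lt_trans (ih h (lt_of_lt_of_le hc (t_anti (Nat.le_succ s)))) (col s c hc)
      · subst h; exact col r c hc
  have mem_row : ∀ r c, c < t r → e r c ∈ row r := by
    intro r c hc
    rw [he]
    simp only []
    rw [List.getD_eq_getElem _ _ (by rw [row_len]; exact hc)]
    exact List.getElem_mem _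
  have rowmem : ∀ r, r < L → row r ∈ T := by
    intro r hr
    rw [hrow]
    simp only []
    rw [List.getD_eq_getElem T [] hr]
    exact List.getElem_mem _
  have cc_pos : ∀ r c, r < L → c < t r → 0 < contentCount T (e r c) := by
    intro r c hr hc
    have h1 : 0 < (row r).count (e r c) := List.count_pos_iff.2 (mem_row r c hc)
    have h2 : (row r).count (e r c) ∈ T.map (fun x => x.count (e r c)) :=
      List.mem_map.2 ⟨row r, rowmem r hr, rfl⟩
    exact lt_of_lt_of_le h1 (List.single_le_sum (by intro x _; omega) _ h2)
  have entry_lt : ∀ r c, r < L → c < t r → e r c < k := by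
    intro r c hr hc
    by_contra hk
    have := ha (e r c)
    rw [dif_neg (by omega)] at this
    have h2 := cc_pos r c hr hc
    omega
  have row0_ge : ∀ r, r < L → r ≤ e r 0 := by
    intro r
    induction r with
    | zero => omega
    | succ r ih =>
      intro hr
      have h1 : 0 < t (r+1) := by
        have : τ.getD (r+1) 0 = τ[r+1]'(by omega) := List.getD_eq_getElem τ 0 (by omega)
        have hmem : τ[r+1]'(by omega) ∈ τ := List.getElem_mem _
        have := hτ.2 _ hmem
        rw [ht, tl]; omega
      have := col r 0 h1
      have := ih (by omega)
      omega
  have len_le : τ.length ≤ k := by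
    rcases Nat.eq_zero_or_pos L with h0 | h0
    · omega
    · have h1 : L - 1 < L := by omega
      have h2 : 0 < t (L-1) := by
        have : τ.getD (L-1) 0 = τ[L-1]'(by omega) := List.getD_eq_getElem τ 0 (by omega)
        have hmem : τ[L-1]'(by omega) ∈ τ := List.getElem_mem _
        have := hτ.2 _ hmem
        rw [ht, tl]; omega
      have := row0_ge (L-1) h1
      have := entry_lt (L-1) 0 h1 h2
      omega
  -- key identity: for S' a set of values, the sum of contentCounts equals a cell count
  have key : ∀ S' : Finset ℕ,
      ∑ v ∈ S', contentCount T v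
        = ∑ r ∈ Finset.range L, (row r).countP (fun x => decide (x ∈ S')) := by
    intro S'
    have h1 : ∀ v, contentCount T v = ∑ r ∈ Finset.range L, (row r).count v := by
      intro v
      rw [contentCount, map_sum_getD]
    calc ∑ v ∈ S', contentCount T v
        = ∑ v ∈ S', ∑ r ∈ Finset.range L, (row r).count v := by
          apply Finset.sum_congr rfl; intro v _; exact h1 v
      _ = ∑ r ∈ Finset.range L, ∑ v ∈ S', (row r).count v := Finset.sum_comm
      _ = _ := by
          apply Finset.sum_congr rfl; intro r _; exact sum_count_eq_countP (row r) S'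
  refine ⟨?_, len_le, ?_⟩
  · -- total sum
    have hS' : (Finset.univ : Finset (Fin k)).image Fin.val = Finset.range k := by
      ext v; simp [Fin.exists_iff]
    have h1 : ∑ i : Fin k, a i = ∑ v ∈ Finset.range k, contentCount T v := by
      rw [← hS', Finset.sum_image (by intro x _ y _ h; exact Fin.val_injective h)]
      apply Finset.sum_congr rfl
      intro i _
      rw [ha i, dif_pos i.isLt]
    rw [h1, key]
    have h2 : ∀ r ∈ Finset.range L, (row r).countP (fun x => decide (x ∈ Finset.range k)) = t r := by
      intro r hr
      rw [Finset.mem_range] at hr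
      rw [← row_len r]
      apply List.countP_eq_length.2
      intro x hx
      obtain ⟨c, hc, hcx⟩ := List.mem_iff_getElem.1 hx
      have hxe : x = e r c := by
        rw [← hcx]; exact (List.getD_eq_getElem _ _ hc).symm
      subst hxe
      simp only [decide_eq_true_eq, Finset.mem_range]
      exact entry_lt r c hr (by rw [← row_len]; exact hc)
    rw [Finset.sum_congr rfl h2]
    have hPL : ∑ r ∈ Finset.range L, t r = P t L := rfl
    rw [hPL, ← hLτ, ← take_sum_eq, List.take_length]
  · -- subset bound
    intro S
    set S' := S.image Fin.val with hS'
    set i := S.card with hi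
    have cardS' : S'.card = i := Finset.card_image_of_injective _ Fin.val_injective
    have h1 : ∑ j ∈ S, a j = ∑ v ∈ S', contentCount T v := by
      rw [hS', Finset.sum_image (by intro x _ y _ h; exact Fin.val_injective h)]
      apply Finset.sum_congr rfl
      intro j _
      rw [ha j, dif_pos j.isLt]
    rw [h1, key]
    set C := t 0 with hC
    have h2 : ∀ r ∈ Finset.range L, (row r).countP (fun x => decide (x ∈ S'))
        = ∑ c ∈ Finset.range C, (if c < t r ∧ e r c ∈ S' then 1 else 0) := by
      intro r _
      rw [countP_eq_sum_range, row_len]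
      rw [← filter_range_lt (t r) C (t_anti (Nat.zero_le r))]
      rw [Finset.sum_filter]
      apply Finset.sum_congr rfl
      intro c _
      by_cases h : c < t r <;> simp [h, he]
    rw [Finset.sum_congr rfl h2, Finset.sum_comm]
    have h3 : ∀ c ∈ Finset.range C,
        (∑ r ∈ Finset.range L, if c < t r ∧ e r c ∈ S' then 1 else 0)
          ≤ ∑ r ∈ Finset.range i, if c < t r then 1 else 0 := by
      intro c _
      rw [← Finset.card_filter, ← Finset.card_filter]
      set F := (Finset.range L).filter (fun r => c < t r ∧ e r c ∈ S') with hF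
      have hcard : F.card ≤ i := by
        rw [← cardS']
        apply Finset.card_le_card_of_injOn (fun r => e r c)
        · intro r hr
          exact ((Finset.mem_filter.1 hr).2).2
        · intro r hr s hs hrs
          rcases lt_trichotomy r s with h | h | h
          · exact absurd hrs (ne_of_lt (chain r s c h ((Finset.mem_filter.1 hs).2).1))
          · exact h
          · exact absurd hrs.symm (ne_of_lt (chain s r c h ((Finset.mem_filter.1 hr).2).1))
      exact downclosed_card_le (fun r => c < t r)
        (fun r s hrs hcs => lt_of_lt_of_le hcs (t_anti hrs)) i F
        (fun r hr => ((Finset.mem_filter.1 hr).2).1) hcard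
    calc ∑ c ∈ Finset.range C, ∑ r ∈ Finset.range L, (if c < t r ∧ e r c ∈ S' then 1 else 0)
        ≤ ∑ c ∈ Finset.range C, ∑ r ∈ Finset.range i, (if c < t r then 1 else 0) :=
          Finset.sum_le_sum h3
      _ = ∑ r ∈ Finset.range i, ∑ c ∈ Finset.range C, (if c < t r then 1 else 0) :=
          Finset.sum_comm
      _ = ∑ r ∈ Finset.range i, t r := by
          apply Finset.sum_congr rfl
          intro r _
          rw [← Finset.card_filter, filter_range_lt (t r) C (t_anti (Nat.zero_le r)),
            Finset.card_range]
      _ = P t i := rfl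

/-! ### strip operator -/

def st (m : ℕ) (t : ℕ → ℕ) : ℕ → ℕ := fun r => t r - min m (t r) + min m (t (r+1))

lemma st_le (m : ℕ) {t : ℕ → ℕ} (ht : Antitone t) (r : ℕ) : st m t r ≤ t r := by
  have h1 : t (r+1) ≤ t r := ht (Nat.le_succ r)
  simp only [st]; omega

lemma st_anti (m : ℕ) {t : ℕ → ℕ} (ht : Antitone t) : Antitone (st m t) := by
  apply antitone_nat_of_succ_le
  intro r
  have h1 : t (r+1) ≤ t r := ht (Nat.le_succ r)
  have h2 : t (r+1+1) ≤ t (r+1) := ht (by omega)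
  rcases le_total m (t r) with hc1 | hc1 <;> rcases le_total m (t (r+1)) with hc2 | hc2 <;>
    rcases le_total m (t (r+1+1)) with hc3 | hc3 <;>
    simp only [st, min_eq_left, min_eq_right, hc1, hc2, hc3] <;> omega

lemma st_cross (m : ℕ) {t : ℕ → ℕ} (ht : Antitone t) (r : ℕ) : t (r+1) ≤ st m t r := by
  have h1 : t (r+1) ≤ t r := ht (Nat.le_succ r)
  simp only [st]; omega

lemma P_st (m : ℕ) (t : ℕ → ℕ) (i : ℕ) :
    P (st m t) i + min m (t 0) = P t i + min m (t i) := by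
  induction i with
  | zero => simp [P]
  | succ i ih =>
    have h1 : P (st m t) (i+1) = P (st m t) i + st m t i := Finset.sum_range_succ _ _
    have h2 : P t (i+1) = P t i + t i := Finset.sum_range_succ _ _
    have h3 : st m t i + min m (t i) = t i + min m (t (i+1)) := by
      simp only [st]; omega
    omega

/-! ### row builder -/

def JR (g : ℕ → ℕ) (k : ℕ) : List ℕ :=
  ((List.range k).map (fun v => List.replicate (g (v+1) - g v) v)).flatten

lemma JR_succ (g : ℕ → ℕ) (k : ℕ) :
    JR g (k+1) = JR g k ++ List.replicate (g (k+1) - g k) k := by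
  rw [JR, List.range_succ, List.map_append, List.flatten_append]
  simp [JR]

lemma JR_mem {g : ℕ → ℕ} {k x : ℕ} (hx : x ∈ JR g k) : x < k := by
  induction k with
  | zero => simp [JR] at hx
  | succ k ih =>
    rw [JR_succ] at hx
    rcases List.mem_append.1 hx with h | h
    · exact lt_trans (ih h) (Nat.lt_succ_self k)
    · rw [List.eq_of_mem_replicate h]; exact Nat.lt_succ_self k

lemma JR_length {g : ℕ → ℕ} (hg : Monotone g) (k : ℕ) :
    (JR g k).length = g k - g 0 := by
  induction k with
  | zero => simp [JR]
  | succ k ih =>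
    rw [JR_succ, List.length_append, ih, List.length_replicate]
    have h1 : g 0 ≤ g k := hg (Nat.zero_le k)
    have h2 : g k ≤ g (k+1) := hg (Nat.le_succ k)
    omega

lemma JR_sorted (g : ℕ → ℕ) (k : ℕ) : (JR g k).Pairwise (· ≤ ·) := by
  induction k with
  | zero => simp [JR]
  | succ k ih =>
    rw [JR_succ, List.pairwise_append]
    refine ⟨ih, List.pairwise_replicate.2 (by simp), ?_⟩
    intro x hx y hy
    rw [List.eq_of_mem_replicate hy]
    exact le_of_lt (JR_mem hx)

lemma JR_getD {g : ℕ → ℕ} (hg : Monotone g) (hg0 : g 0 = 0) {k v c : ℕ}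
    (hvk : v < k) (h1 : g v ≤ c) (h2 : c < g (v+1)) : (JR g k).getD c 0 = v := by
  induction k with
  | zero => omega
  | succ k ih =>
    rw [JR_succ]
    rcases Nat.lt_succ_iff_lt_or_eq.1 hvk with h | h
    · have hc : c < (JR g k).length := by
        rw [JR_length hg, hg0]
        have : g (v+1) ≤ g k := hg h
        omega
      rw [List.getD_append _ _ _ _ hc]
      exact ih h
    · subst h
      have hlen : (JR g v).length = g v := by rw [JR_length hg, hg0]; omega
      rw [List.getD_append_right _ _ _ _ (by omega), hlen]
      rw [List.getD_eq_getElem _ _ (by rw [List.length_replicate]; omega)]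
      simp

lemma JR_count {g : ℕ → ℕ} (hg : Monotone g) (k : ℕ) (x : ℕ) :
    (JR g k).count x = if x < k then g (x+1) - g x else 0 := by
  induction k with
  | zero => simp [JR]
  | succ k ih =>
    rw [JR_succ, List.count_append, ih, List.count_replicate]
    rcases lt_trichotomy x k with h | h | h
    · rw [if_pos h, if_pos (show x < k + 1 by omega),
        if_neg (show ¬ ((k == x) = true) by simp; omega)]
      omega
    · subst h
      rw [if_neg (lt_irrefl _), if_pos (Nat.lt_succ_self _),
        if_pos (show ((x == x) = true) by simp)]
      omega
    · rw [if_neg (show ¬ x < k by omega), if_neg (show ¬ x < k + 1 by omega),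
        if_neg (show ¬ ((k == x) = true) by simp; omega)]

lemma JR_ivt {g : ℕ → ℕ} (hg : Monotone g) {k c : ℕ} (h0 : g 0 ≤ c) (hk : c < g k) :
    ∃ v < k, g v ≤ c ∧ c < g (v+1) := by
  induction k with
  | zero => omega
  | succ k ih =>
    by_cases h : c < g k
    · obtain ⟨v, hv, h1, h2⟩ := ih h
      exact ⟨v, by omega, h1, h2⟩
    · exact ⟨k, Nat.lt_succ_self k, not_lt.1 h, hk⟩

lemma sum_nat_sub {s : Finset ℕ} {f h : ℕ → ℕ} (hle : ∀ x ∈ s, h x ≤ f x) :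
    ∑ x ∈ s, (f x - h x) = ∑ x ∈ s, f x - ∑ x ∈ s, h x := by
  have key : ∑ x ∈ s, (f x - h x) + ∑ x ∈ s, h x = ∑ x ∈ s, f x := by
    rw [← Finset.sum_add_distrib]
    apply Finset.sum_congr rfl
    intro x hx
    have := hle x hx
    omega
  omega

theorem attach_sum (k : ℕ) (S : Finset ℕ) (hS : ∀ x ∈ S, x < k) (a : Fin k → ℕ) :
    ∑ i ∈ S.attachFin hS, a i = ∑ x ∈ S, (if h : x < k then a ⟨x,h⟩ else 0) := by
  refine Finset.sum_bij' (fun (x : Fin k) (_ : x ∈ S.attachFin hS) => (x : ℕ))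
    (fun x hx => (⟨x, hS x hx⟩ : Fin k))
    (fun x hx => (Finset.mem_attachFin hS).1 hx)
    (fun x hx => (Finset.mem_attachFin hS).2 hx)
    (fun x hx => rfl) (fun x hx => rfl) (fun x hx => ?_)
  rw [dif_pos x.isLt]

theorem ssyt_exists {l : List ℕ} (hl : IsPartition l) {k : ℕ} (hlk : l.length ≤ k)
    (a : Fin k → ℕ) (hsum : ∑ i, a i = l.sum)
    (hsub : ∀ S : Finset (Fin k), ∑ i ∈ S, a i ≤ P (tl l) S.card) :
    ∃ T, IsSSYT l T ∧ hasContent k T a := by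
  classical
  set a' : ℕ → ℕ := fun v => if h : v < k then a ⟨v, h⟩ else 0 with ha'
  set N := l.length with hN
  have tl_anti : Antitone (tl l) := tl_antitone hl.1
  -- ℕ-indexed versions of the hypotheses
  have hsub' : ∀ S : Finset ℕ, (∀ x ∈ S, x < k) → ∑ x ∈ S, a' x ≤ P (tl l) S.card := by
    intro S hS
    rw [ha', ← attach_sum k S hS a, ← Finset.card_attachFin S hS]
    exact hsub _
  have hsum' : ∑ v ∈ Finset.range k, a' v = l.sum := by
    rw [← hsum, Finset.sum_range fun v => a' v]
    apply Finset.sum_congr rfl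
    intro i _
    rw [ha']
    simp
  -- the shape chain
  set u : ℕ → ℕ → ℕ := fun j => Nat.rec (tl l) (fun j' τ => st (a' (k - 1 - j')) τ) j with hu
  have u_zero : u 0 = tl l := rfl
  have u_succ : ∀ j, u (j+1) = st (a' (k - 1 - j)) (u j) := fun j => rfl
  have uanti : ∀ j, Antitone (u j) := by
    intro j
    induction j with
    | zero => exact tl_anti
    | succ j ih => rw [u_succ]; exact st_anti _ ih
  have ule : ∀ j r, u (j+1) r ≤ u j r := by
    intro j r
    rw [u_succ]
    exact st_le _ (uanti j) r
  have ulel : ∀ j r, u j r ≤ tl l r := by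
    intro j
    induction j with
    | zero => intro r; exact le_refl _
    | succ j ih => intro r; exact le_trans (ule j r) (ih r)
  have uzero : ∀ j r, N ≤ r → u j r = 0 := by
    intro j r hr
    have := ulel j r
    rw [tl_eq_zero hr] at this
    omega
  have ucross : ∀ j r, u j (r+1) ≤ u (j+1) r := by
    intro j r
    rw [u_succ]
    exact st_cross _ (uanti j) r
  -- the invariant
  have Inv : ∀ j, j ≤ k → ∀ S : Finset ℕ, (∀ x ∈ S, x < k - j) →
      ∑ x ∈ S, a' x ≤ P (u j) S.card := by
    intro j
    induction j with
    | zero =>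
      intro _ S hS
      rw [u_zero]
      exact hsub' S (fun x hx => by have := hS x hx; omega)
    | succ j ih =>
      intro hj S hS
      have hPst := P_st (a' (k - 1 - j)) (u j) S.card
      rcases le_total (a' (k - 1 - j)) (u j S.card) with hc | hc
      · have h0 : min (a' (k - 1 - j)) (u j S.card) = a' (k - 1 - j) := min_eq_left hc
        have h1 : a' (k - 1 - j) ≤ u j 0 := le_trans hc (uanti j (Nat.zero_le _))
        have h2 : min (a' (k - 1 - j)) (u j 0) = a' (k - 1 - j) := min_eq_left h1
        have h3 := ih (by omega) S (fun x hx => by have := hS x hx; omega)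
        rw [u_succ]
        omega
      · have h0 : min (a' (k - 1 - j)) (u j S.card) = u j S.card := min_eq_right hc
        have hnotmem : k - 1 - j ∉ S := fun hmm => by have := hS _ hmm; omega
        have h3 := ih (by omega) (insert (k-1-j) S)
          (by
            intro x hx
            rcases Finset.mem_insert.1 hx with rfl | hx
            · omega
            · have := hS x hx; omega)
        rw [Finset.sum_insert hnotmem, Finset.card_insert_of_notMem hnotmem] at h3
        have h4 : P (u j) (S.card + 1) = P (u j) S.card + u j S.card := Finset.sum_range_succ _ _
        have h5 : min (a' (k - 1 - j)) (u j 0) ≤ a' (k - 1 - j) := min_le_left _ _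
        rw [u_succ]
        omega
  have m_le : ∀ j, j < k → a' (k - 1 - j) ≤ u j 0 := by
    intro j hj
    have := Inv j (by omega) {k - 1 - j} (by intro x hx; rw [Finset.mem_singleton] at hx; omega)
    rw [Finset.sum_singleton, Finset.card_singleton] at this
    calc a' (k-1-j) ≤ P (u j) 1 := this
    _ = u j 0 := by rw [P]; exact Finset.sum_range_one (f := u j)
  have szdiff : ∀ j, j < k → P (u (j+1)) N + a' (k - 1 - j) = P (u j) N := by
    intro j hj
    have h1 := P_st (a' (k-1-j)) (u j) N
    rw [uzero j N (le_refl N)] at h1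
    rw [min_eq_left (m_le j hj)] at h1
    rw [u_succ]
    omega
  have size : ∀ j, j ≤ k → P (u j) N + ∑ t ∈ Finset.range j, a' (k - 1 - t) = l.sum := by
    intro j
    induction j with
    | zero =>
      intro _
      rw [u_zero, Finset.sum_range_zero, ← take_sum_eq, hN, List.take_length]
      omega
    | succ j ih =>
      intro hj
      have h1 := ih (by omega)
      have h2 := szdiff j (by omega)
      rw [Finset.sum_range_succ]
      omega
  have uk_zero : ∀ r, u k r = 0 := by
    have h1 := size k (le_refl k)
    rw [Finset.sum_range_reflect (fun t => a' t) k] at h1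
    rw [hsum'] at h1
    have h2 : P (u k) N = 0 := by omega
    intro r
    by_cases hr : r < N
    · have := Finset.sum_eq_zero_iff.1 h2 r (Finset.mem_range.2 hr)
      exact this
    · exact uzero k r (by omega)
  -- the row cumulative functions
  set G : ℕ → ℕ → ℕ := fun r v => u (k - v) r with hG
  have gmono : ∀ r, Monotone (G r) := by
    intro r
    apply monotone_nat_of_le_succ
    intro v
    simp only [hG]
    by_cases hv : v < k
    · have : k - v = (k - (v+1)) + 1 := by omega
      rw [this]
      exact ule (k - (v+1)) r
    · have : k - v = k - (v+1) := by omega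
      rw [this]
  have g0 : ∀ r, G r 0 = 0 := by
    intro r
    simp only [hG, Nat.sub_zero]
    exact uk_zero r
  have gk : ∀ r, G r k = tl l r := by
    intro r
    simp only [hG, Nat.sub_self]
    rfl
  have gcross : ∀ r v, v < k → G (r+1) (v+1) ≤ G r v := by
    intro r v hv
    simp only [hG]
    have h1 : k - v = (k - (v+1)) + 1 := by omega
    rw [h1]
    exact ucross (k - (v+1)) r
  -- the tableau
  set T : List (List ℕ) := (List.range N).map (fun r => JR (G r) k) with hT
  have TgetD : ∀ r, r < N → T.getD r [] = JR (G r) k := by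
    intro r hr
    rw [hT, List.getD_eq_getElem _ _ (by simpa using hr)]
    simp
  have TgetD' : ∀ r, N ≤ r → T.getD r [] = [] := by
    intro r hr
    apply List.getD_eq_default
    rw [hT, List.length_map, List.length_range]
    exact hr
  have Tlen : ∀ r, r < N → (T.getD r []).length = tl l r := by
    intro r hr
    rw [TgetD r hr, JR_length (gmono r), g0, gk]
    omega
  refine ⟨T, ⟨?_, ?_, ?_⟩, ?_⟩
  · -- row lengths
    apply List.ext_getElem
    · simp [hT, hN]
    · intro i h1 h2
      simp only [hT, List.getElem_map, List.getElem_range]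
      have hi : i < N := by simpa [hT] using h1
      rw [JR_length (gmono _), g0, gk]
      rw [tl, List.getD_eq_getElem _ _ h2]
      omega
  · -- rows sorted
    intro r hr
    obtain ⟨x, _, rfl⟩ := List.mem_map.1 hr
    exact JR_sorted _ _
  · -- columns strict
    intro i j hj
    by_cases hi1 : i + 1 < N
    · have hi : i < N := by omega
      rw [TgetD _ hi1] at hj ⊢
      rw [TgetD _ hi]
      rw [JR_length (gmono _), g0 (i+1), gk (i+1)] at hj
      have hjlt : j < G (i+1) k := by rw [gk]; omega
      obtain ⟨v, hvk, hv1, hv2⟩ := JR_ivt (gmono (i+1)) (by rw [g0]; omega) hjlt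
      rw [JR_getD (gmono (i+1)) (g0 (i+1)) hvk hv1 hv2]
      have hcr : G (i+1) (v+1) ≤ G i v := gcross i v hvk
      have hv0 : 0 < v := by
        rcases Nat.eq_zero_or_pos v with rfl | h
        · rw [g0] at hcr; omega
        · exact h
      have hjv : j < G i v := by omega
      obtain ⟨w, hwv, hw1, hw2⟩ := JR_ivt (gmono i) (by rw [g0]; omega) hjv
      rw [JR_getD (gmono i) (g0 i) (by omega) hw1 hw2]
      omega
    · rw [TgetD' _ (by omega)] at hj
      simp at hj
  · -- content
    intro v
    have h1 : contentCount T v = ∑ r ∈ Finset.range N, (JR (G r) k).count v := by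
      rw [contentCount, hT, List.map_map, sum_range_eq_list]
      rfl
    rw [h1]
    by_cases hv : v < k
    · have h2 : ∀ r ∈ Finset.range N, (JR (G r) k).count v = G r (v+1) - G r v := by
        intro r _
        rw [JR_count (gmono r) k v, if_pos hv]
      rw [Finset.sum_congr rfl h2, dif_pos hv]
      have h3 : ∀ r ∈ Finset.range N, G r v ≤ G r (v+1) := fun r _ => gmono r (Nat.le_succ v)
      rw [sum_nat_sub h3]
      have h4 : ∑ r ∈ Finset.range N, G r (v+1) = P (u (k - (v+1))) N := rfl
      have h5 : ∑ r ∈ Finset.range N, G r v = P (u (k - v)) N := rfl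
      rw [h4, h5]
      have h6 : k - v = (k - (v+1)) + 1 := by omega
      have h7 := szdiff (k - (v+1)) (by omega)
      rw [← h6] at h7
      have h8 : k - 1 - (k - (v+1)) = v := by omega
      rw [h8] at h7
      have h9 : a' v = a ⟨v, hv⟩ := by rw [ha']; simp [hv]
      omega
    · rw [dif_neg hv]
      apply Finset.sum_eq_zero
      intro r _
      rw [JR_count (gmono r) k v, if_neg hv]

lemma dom_length {l τ : List ℕ} (hl : IsPartition l) (hsum : l.sum = τ.sum)
    (hd : Dominates l τ) : l.length ≤ τ.length := by
  by_contra hlen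
  push_neg at hlen
  have h1 := hd τ.length
  rw [List.take_of_length_le (le_refl τ.length)] at h1
  have h2 : l.sum = (l.take τ.length).sum + (l.drop τ.length).sum := by
    rw [← List.sum_append, List.take_append_drop]
  have h3 : (l.take τ.length).sum ≤ l.sum := by
    conv_rhs => rw [h2]
    omega
  have h4 : (l.drop τ.length).sum = 0 := by omega
  have h5 : l.drop τ.length ≠ [] := by
    intro h
    rw [List.drop_eq_nil_iff] at h
    omega
  cases hdrop : l.drop τ.length with
  | nil => exact h5 hdrop
  | cons x xs =>
    have hx : x ∈ l := List.drop_subset _ _ (by rw [hdrop]; exact List.mem_cons_self)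
    have := hl.2 x hx
    rw [hdrop, List.sum_cons] at h4
    omega

end KronSNP

open KronSNP

/-- Let `μ, ν ⊢ n` and let `g = g(μ,ν,·)` be the Kronecker coefficients.
Suppose there is a partition `l ⊢ n` with `g(μ,ν,l) > 0` dominating every partition `τ`
with `g(μ,ν,τ) > 0`.  Then for every `k` a monomial appears in `s_μ ∗ s_ν(x_1,…,x_k)`
iff it appears in `s_l(x_1,…,x_k)`; in particular `s_μ ∗ s_ν` has a saturated Newton
polytope. -/
theorem kron_unique_max_SNP (n k : ℕ) (g : List ℕ → ℕ) (l : List ℕ)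
    (hl : IsPartition l) (hls : l.sum = n) (hg : 0 < g l)
    (hmax : ∀ τ, IsPartition τ → τ.sum = n → 0 < g τ → Dominates l τ) :
    kronSupport n k g = schurSupport k l ∧
    ∀ γ : Fin k → ℤ,
      (fun i => (γ i : ℝ)) ∈
          convexHull ℝ ((fun a : Fin k → ℕ => fun i => (a i : ℝ)) '' kronSupport n k g) →
      ∃ a ∈ kronSupport n k g, ∀ i, (a i : ℤ) = γ i := by
  have part1 : kronSupport n k g = schurSupport k l := by
    apply Set.eq_of_subset_of_subset
    · rintro a ⟨τ, hτp, hτs, hgτ, T, hT, hc⟩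
      obtain ⟨hsumA, hlenτ, hsubA⟩ := ssyt_facts hτp hT hc
      have hdom := hmax τ hτp hτs hgτ
      have hlk : l.length ≤ k :=
        le_trans (dom_length hl (by omega) hdom) hlenτ
      obtain ⟨T', hT', hc'⟩ := ssyt_exists hl hlk a (by omega) (by
        intro S
        calc ∑ i ∈ S, a i ≤ P (tl τ) S.card := hsubA S
        _ ≤ P (tl l) S.card := by
            rw [← take_sum_eq, ← take_sum_eq]
            exact hdom S.card)
      exact ⟨T', hT', hc'⟩
    · rintro a ⟨T, hT, hc⟩
      exact ⟨l, hl, hls, hg, T, hT, hc⟩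
  refine ⟨part1, ?_⟩
  intro γ hγ
  -- the support is nonempty, so l has at most k parts
  have hne : (kronSupport n k g).Nonempty := by
    have h : ((fun a : Fin k → ℕ => fun i => (a i : ℝ)) '' kronSupport n k g).Nonempty :=
      convexHull_nonempty_iff.1 ⟨_, hγ⟩
    obtain ⟨x, a0, ha0, -⟩ := h
    exact ⟨a0, ha0⟩
  obtain ⟨a0, ha0⟩ := hne
  have ha0s : a0 ∈ schurSupport k l := part1 ▸ ha0
  obtain ⟨T0, hT0, hc0⟩ := ha0s
  have hlk : l.length ≤ k := (ssyt_facts hl hT0 hc0).2.1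
  -- the convex region
  set Q : Set (Fin k → ℝ) := {x | (∀ i, 0 ≤ x i) ∧ (∑ i, x i = (n:ℝ)) ∧
      ∀ S : Finset (Fin k), ∑ i ∈ S, x i ≤ ((P (tl l) S.card : ℕ) : ℝ)} with hQ
  have hQconv : Convex ℝ Q := by
    intro x hx y hy s t hs ht hst
    obtain ⟨hx1, hx2, hx3⟩ := hx
    obtain ⟨hy1, hy2, hy3⟩ := hy
    refine ⟨?_, ?_, ?_⟩
    · intro i
      have := hx1 i
      have := hy1 i
      simp only [Pi.add_apply, Pi.smul_apply, smul_eq_mul]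
      positivity
    · simp only [Pi.add_apply, Pi.smul_apply, smul_eq_mul]
      rw [Finset.sum_add_distrib, ← Finset.mul_sum, ← Finset.mul_sum, hx2, hy2]
      nlinarith
    · intro S
      simp only [Pi.add_apply, Pi.smul_apply, smul_eq_mul]
      rw [Finset.sum_add_distrib, ← Finset.mul_sum, ← Finset.mul_sum]
      calc s * ∑ i ∈ S, x i + t * ∑ i ∈ S, y i
          ≤ s * ((P (tl l) S.card : ℕ) : ℝ) + t * ((P (tl l) S.card : ℕ) : ℝ) := by
            apply add_le_add
            · exact mul_le_mul_of_nonneg_left (hx3 S) hs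
            · exact mul_le_mul_of_nonneg_left (hy3 S) ht
        _ = ((P (tl l) S.card : ℕ) : ℝ) := by rw [← add_mul, hst, one_mul]
  have himg : (fun a : Fin k → ℕ => fun i => (a i : ℝ)) '' kronSupport n k g ⊆ Q := by
    rintro _ ⟨a, haK, rfl⟩
    have has : a ∈ schurSupport k l := part1 ▸ haK
    obtain ⟨T, hT, hc⟩ := has
    obtain ⟨hsumA, -, hsubA⟩ := ssyt_facts hl hT hc
    refine ⟨fun i => by positivity, ?_, ?_⟩
    · rw [← Nat.cast_sum, hsumA, hls]
    · intro S
      rw [← Nat.cast_sum]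
      exact_mod_cast hsubA S
  have hγQ : (fun i => (γ i : ℝ)) ∈ Q := convexHull_min himg hQconv hγ
  obtain ⟨hγ1, hγ2, hγ3⟩ := hγQ
  set b : Fin k → ℕ := fun i => (γ i).toNat with hb
  have hbi : ∀ i, (b i : ℤ) = γ i := by
    intro i
    have h1 : (0:ℝ) ≤ (γ i : ℝ) := hγ1 i
    have h2 : (0:ℤ) ≤ γ i := by exact_mod_cast h1
    rw [hb]
    simp [Int.toNat_of_nonneg h2]
  have hbr : ∀ i, ((b i : ℕ) : ℝ) = (γ i : ℝ) := by
    intro i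
    have := hbi i
    exact_mod_cast congrArg (fun z : ℤ => (z : ℝ)) this
  have hbsum : ∑ i, b i = l.sum := by
    have h1 : ((∑ i, b i : ℕ) : ℝ) = (n : ℝ) := by
      rw [Nat.cast_sum]
      rw [← hγ2]
      apply Finset.sum_congr rfl
      intro i _
      exact hbr i
    have h2 : (∑ i, b i : ℕ) = n := by exact_mod_cast h1
    omega
  have hbsub : ∀ S : Finset (Fin k), ∑ i ∈ S, b i ≤ P (tl l) S.card := by
    intro S
    have h1 : ((∑ i ∈ S, b i : ℕ) : ℝ) ≤ ((P (tl l) S.card : ℕ) : ℝ) := by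
      rw [Nat.cast_sum]
      calc ∑ i ∈ S, ((b i : ℕ) : ℝ) = ∑ i ∈ S, ((γ i : ℤ) : ℝ) := by
            apply Finset.sum_congr rfl
            intro i _
            exact hbr i
        _ ≤ _ := hγ3 S
    exact_mod_cast h1
  obtain ⟨T', hT', hc'⟩ := ssyt_exists hl hlk b hbsum hbsub
  refine ⟨b, ?_, hbi⟩
  rw [part1]
  exact ⟨T', hT', hc'⟩
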